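/- arXiv:2211.02096 — 3 statements merged into one kernel-verified Lean document; each statement's English description precedes it below -/
import Mathlib

section
/- Let a, b, c be real numbers with 0 < a < c ≤ b. There exists a constant C > 0 such that for all sufficiently large T, ∑_{(n_2,n_3)} n_2^{(a+b)/(6a)} n_3^{(a+c)/(6a)} ≤ C · T^{1/4 + 3a/(2(a+c))} · log T, where the sum runs over pairs of positive integers (n_2, n_3) with n_2^{a+b} n_3^{a+c} ≤ T^{3a/2}. -/
open Finset Real

theorem stmt_3 (a b c : ℝ) (ha : 0 < a) (hac : a < c) (hcb : c ≤ b) :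
    ∃ C > 0, ∃ T₀ : ℝ, ∀ T ≥ T₀,
      (∑' p : ℕ × ℕ,
        (if 0 < p.1 ∧ 0 < p.2 ∧ (p.1 : ℝ) ^ (a + b) * (p.2 : ℝ) ^ (a + c) ≤ T ^ (3 * a / 2)
          then (p.1 : ℝ) ^ ((a + b) / (6 * a)) * (p.2 : ℝ) ^ ((a + c) / (6 * a)) else 0))
        ≤ C * T ^ (1/4 + 3 * a / (2 * (a + c))) * Real.log T := by
  have hα : 0 < a + b := by linarith
  have hβ : 0 < a + c := by linarith
  have hβα : a + c ≤ a + b := by linarith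
  refine ⟨1 + 3 * a / (2 * (a + b)), by positivity, Real.exp 1, ?_⟩
  intro T hT
  have hT1 : (1:ℝ) ≤ T := le_trans (by nlinarith [Real.add_one_le_exp 1]) hT
  have hTpos : (0:ℝ) < T := by linarith
  have hlogT : 1 ≤ Real.log T := by
    rw [← Real.log_exp 1]
    exact Real.log_le_log (Real.exp_pos 1) hT
  set X : ℝ := T ^ (3 * a / 2) with hXdef
  have hX1 : (1:ℝ) ≤ X := Real.one_le_rpow hT1 (by positivity)
  have hXpos : (0:ℝ) < X := by linarith
  set N2 : ℕ := ⌊X ^ (a + b)⁻¹⌋₊ with hN2def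
  set N3 : ℕ := ⌊X ^ (a + c)⁻¹⌋₊ with hN3def
  set S : Finset (ℕ × ℕ) := Finset.Icc 1 N2 ×ˢ Finset.Icc 1 N3 with hSdef
  -- the summand vanishes outside S
  have hsupp : ∀ p : ℕ × ℕ, p ∉ S →
      (if 0 < p.1 ∧ 0 < p.2 ∧ (p.1 : ℝ) ^ (a + b) * (p.2 : ℝ) ^ (a + c) ≤ X
        then (p.1 : ℝ) ^ ((a + b) / (6 * a)) * (p.2 : ℝ) ^ ((a + c) / (6 * a)) else 0) = 0 := by
    intro p hp
    rw [if_neg]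
    rintro ⟨h1, h2, h3⟩
    apply hp
    have hc1 : (1:ℝ) ≤ (p.1 : ℝ) := by exact_mod_cast h1
    have hc2 : (1:ℝ) ≤ (p.2 : ℝ) := by exact_mod_cast h2
    have hb1 : (p.1 : ℝ) ^ (a + b) ≤ X := by
      nlinarith [Real.one_le_rpow hc2 hβ.le, Real.rpow_pos_of_pos (lt_of_lt_of_le one_pos hc1) (a+b)]
    have hb2 : (p.2 : ℝ) ^ (a + c) ≤ X := by
      nlinarith [Real.one_le_rpow hc1 hα.le, Real.rpow_pos_of_pos (lt_of_lt_of_le one_pos hc2) (a+c)]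
    have e1 : (p.1 : ℝ) ≤ X ^ (a + b)⁻¹ := by
      calc (p.1 : ℝ) = ((p.1 : ℝ) ^ (a+b)) ^ (a+b)⁻¹ := by
            rw [← Real.rpow_mul (p.1).cast_nonneg, mul_inv_cancel₀ hα.ne', Real.rpow_one]
        _ ≤ X ^ (a + b)⁻¹ := Real.rpow_le_rpow (by positivity) hb1 (by positivity)
    have e2 : (p.2 : ℝ) ≤ X ^ (a + c)⁻¹ := by
      calc (p.2 : ℝ) = ((p.2 : ℝ) ^ (a+c)) ^ (a+c)⁻¹ := by
            rw [← Real.rpow_mul (p.2).cast_nonneg, mul_inv_cancel₀ hβ.ne', Real.rpow_one]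
        _ ≤ X ^ (a + c)⁻¹ := Real.rpow_le_rpow (by positivity) hb2 (by positivity)
    simp only [hSdef, Finset.mem_product, Finset.mem_Icc]
    exact ⟨⟨h1, Nat.le_floor e1⟩, ⟨h2, Nat.le_floor e2⟩⟩
  rw [tsum_eq_sum hsupp, Finset.sum_product]
  set u := (a + b) / (6 * a) with hu
  set v := (a + c) / (6 * a) with hv
  set e := (a + c)⁻¹ * (v + 1) with he
  have hv0 : 0 ≤ v := by positivity
  have hN2one : 1 ≤ N2 := by
    rw [hN2def]
    exact Nat.le_floor (by exact_mod_cast Real.one_le_rpow hX1 (by positivity))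
  have key : ∀ n2 ∈ Finset.Icc 1 N2,
      (∑ n3 ∈ Finset.Icc 1 N3,
        if 0 < n2 ∧ 0 < n3 ∧ (n2:ℝ) ^ (a+b) * (n3:ℝ) ^ (a+c) ≤ X
          then (n2:ℝ) ^ u * (n3:ℝ) ^ v else 0)
      ≤ X ^ e * (n2:ℝ)⁻¹ := by
    intro n2 hn2
    rw [Finset.mem_Icc] at hn2
    have hn2one : (1:ℝ) ≤ (n2:ℝ) := by exact_mod_cast hn2.1
    have hn2pos : (0:ℝ) < n2 := by linarith
    set Y := X / (n2:ℝ) ^ (a + b) with hY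
    have hYpos : 0 < Y := div_pos hXpos (Real.rpow_pos_of_pos hn2pos _)
    set M := Y ^ (a + c)⁻¹ with hM
    have hMpos : 0 < M := Real.rpow_pos_of_pos hYpos _
    have step1 : ∀ n3 ∈ Finset.Icc 1 N3,
        (if 0 < n2 ∧ 0 < n3 ∧ (n2:ℝ) ^ (a+b) * (n3:ℝ) ^ (a+c) ≤ X
          then (n2:ℝ) ^ u * (n3:ℝ) ^ v else 0)
        ≤ (if (n3:ℝ) ≤ M then (n2:ℝ) ^ u * M ^ v else 0) := by
      intro n3 _
      by_cases h : 0 < n2 ∧ 0 < n3 ∧ (n2:ℝ) ^ (a+b) * (n3:ℝ) ^ (a+c) ≤ X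
      · have h2 := h.2.1
        have h3 := h.2.2
        have hn3M : (n3:ℝ) ≤ M := by
          have hYle : (n3:ℝ) ^ (a+c) ≤ Y := by
            rw [hY, le_div_iff₀ (Real.rpow_pos_of_pos hn2pos _)]
            nlinarith
          calc (n3:ℝ) = ((n3:ℝ)^(a+c))^(a+c)⁻¹ := by
                rw [← Real.rpow_mul (n3).cast_nonneg, mul_inv_cancel₀ hβ.ne', Real.rpow_one]
            _ ≤ M := Real.rpow_le_rpow (by positivity) hYle (by positivity)
        rw [if_pos h, if_pos hn3M]
        exact mul_le_mul_of_nonneg_left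
          (Real.rpow_le_rpow (n3).cast_nonneg hn3M hv0) (by positivity)
      · rw [if_neg h]
        split_ifs with h'
        · positivity
        · exact le_refl 0
    calc (∑ n3 ∈ Finset.Icc 1 N3,
        if 0 < n2 ∧ 0 < n3 ∧ (n2:ℝ) ^ (a+b) * (n3:ℝ) ^ (a+c) ≤ X
          then (n2:ℝ) ^ u * (n3:ℝ) ^ v else 0)
        ≤ ∑ n3 ∈ Finset.Icc 1 N3, (if (n3:ℝ) ≤ M then (n2:ℝ) ^ u * M ^ v else 0) :=
          Finset.sum_le_sum step1
      _ = ((Finset.Icc 1 N3).filter (fun n3 : ℕ => (n3:ℝ) ≤ M)).card • ((n2:ℝ) ^ u * M ^ v) := by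
          rw [← Finset.sum_filter, Finset.sum_const]
      _ ≤ M * ((n2:ℝ) ^ u * M ^ v) := by
          rw [nsmul_eq_mul]
          refine mul_le_mul_of_nonneg_right ?_ (by positivity)
          have hsub : (Finset.Icc 1 N3).filter (fun n3 : ℕ => (n3:ℝ) ≤ M) ⊆ Finset.Icc 1 ⌊M⌋₊ := by
            intro x hx
            simp only [Finset.mem_filter, Finset.mem_Icc] at hx ⊢
            exact ⟨hx.1.1, Nat.le_floor hx.2⟩
          calc (((Finset.Icc 1 N3).filter (fun n3 : ℕ => (n3:ℝ) ≤ M)).card : ℝ)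
              ≤ ((Finset.Icc 1 ⌊M⌋₊).card : ℝ) := by
                exact_mod_cast Finset.card_le_card hsub
            _ = (⌊M⌋₊ : ℝ) := by rw [Nat.card_Icc]; norm_num
            _ ≤ M := Nat.floor_le hMpos.le
      _ = X ^ e * (n2:ℝ) ^ (u - (a+b) * e) := by
          have h1 : M * ((n2:ℝ) ^ u * M ^ v) = (n2:ℝ) ^ u * M ^ (v+1) := by
            rw [Real.rpow_add_one hMpos.ne']; ring
          have h2 : M ^ (v+1) = X ^ e * (n2:ℝ) ^ (-((a+b) * e)) := by
            rw [hM, ← Real.rpow_mul hYpos.le]  -- wrong direction? Y^((a+c)⁻¹) ^ (v+1) = Y^((a+c)⁻¹*(v+1))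
            rw [← he, hY, Real.div_rpow hXpos.le (Real.rpow_pos_of_pos hn2pos _).le,
              ← Real.rpow_mul (n2).cast_nonneg, div_eq_mul_inv,
              ← Real.rpow_neg (n2).cast_nonneg]
          rw [h1, h2, sub_eq_add_neg, Real.rpow_add hn2pos]
          ring
      _ ≤ X ^ e * (n2:ℝ)⁻¹ := by
          refine mul_le_mul_of_nonneg_left ?_ (by positivity)
          rw [← Real.rpow_neg_one]
          apply Real.rpow_le_rpow_of_exponent_le hn2one
          have hue : u - (a+b) * e = -((a+b)/(a+c)) := by
            rw [hu, he, hv]; field_simp; ring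
          rw [hue, neg_le_neg_iff]
          rw [le_div_iff₀ hβ]
          linarith
  calc (∑ n2 ∈ Finset.Icc 1 N2, ∑ n3 ∈ Finset.Icc 1 N3,
        if 0 < n2 ∧ 0 < n3 ∧ (n2:ℝ) ^ (a+b) * (n3:ℝ) ^ (a+c) ≤ X
          then (n2:ℝ) ^ u * (n3:ℝ) ^ v else 0)
      ≤ ∑ n2 ∈ Finset.Icc 1 N2, X ^ e * (n2:ℝ)⁻¹ := Finset.sum_le_sum key
    _ = X ^ e * ∑ n2 ∈ Finset.Icc 1 N2, (n2:ℝ)⁻¹ := by rw [Finset.mul_sum]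
    _ ≤ X ^ e * (1 + Real.log N2) := by
        refine mul_le_mul_of_nonneg_left ?_ (by positivity)
        calc ∑ n2 ∈ Finset.Icc 1 N2, (n2:ℝ)⁻¹ = ((harmonic N2 : ℚ) : ℝ) := by
              rw [harmonic_eq_sum_Icc]; push_cast; rfl
          _ ≤ 1 + Real.log N2 := harmonic_le_one_add_log N2
    _ ≤ X ^ e * (1 + (a+b)⁻¹ * (3 * a / 2 * Real.log T)) := by
        refine mul_le_mul_of_nonneg_left (by
          have hN2pos : (0:ℝ) < N2 := by exact_mod_cast hN2one
          have hlogN2 : Real.log N2 ≤ (a+b)⁻¹ * (3 * a / 2 * Real.log T) := by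
            calc Real.log N2 ≤ Real.log (X ^ (a+b)⁻¹) := by
                  apply Real.log_le_log hN2pos
                  rw [hN2def]
                  exact Nat.floor_le (by positivity)
              _ = (a+b)⁻¹ * Real.log X := Real.log_rpow hXpos _
              _ = (a+b)⁻¹ * (3 * a / 2 * Real.log T) := by
                  rw [hXdef, Real.log_rpow hTpos]
          linarith) (by positivity)
    _ ≤ X ^ e * ((1 + 3 * a / (2 * (a+b))) * Real.log T) := by
        refine mul_le_mul_of_nonneg_left ?_ (by positivity)
        have hq : (a+b)⁻¹ * (3 * a / 2 * Real.log T) = 3 * a / (2 * (a+b)) * Real.log T := by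
          field_simp
        rw [hq]
        nlinarith [hlogT, (show (0:ℝ) ≤ 3 * a / (2 * (a+b)) by positivity)]
    _ = (1 + 3 * a / (2 * (a+b))) * T ^ (1/4 + 3 * a / (2 * (a+c))) * Real.log T := by
        have hXe : X ^ e = T ^ (1/4 + 3 * a / (2 * (a+c))) := by
          rw [hXdef, ← Real.rpow_mul hTpos.le]
          congr 1
          rw [he, hv]
          field_simp
          ring
        rw [hXe]; ring
end

section
/- Let a, b, c be real numbers with 0 < a < c ≤ b. There exists a constant C > 0 such that for all sufficiently large T, T · ∑_{(n_2,n_3)} n_2^{−1/2 − b/(2a)} n_3^{−1/2 − c/(2a)} ≤ C · T^{1/4 + 3a/(2(a+c))} · log T, where the sum runs over pairs of positive integers (n_2, n_3) with n_2^{a+b} n_3^{a+c} > T^{3a/2}. -/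
open Real Finset

lemma step_ineq (s : ℝ) (hs : 1 < s) (x : ℝ) (hx : 1 ≤ x) :
    (s - 1) * (x + 1) ^ (-s) ≤ x ^ (1 - s) - (x + 1) ^ (1 - s) := by
  have hx0 : (0:ℝ) < x := lt_of_lt_of_le one_pos hx
  have hx1 : (0:ℝ) < x + 1 := by linarith
  have hquot : (0:ℝ) < (x+1)/x := div_pos hx1 hx0
  have hlog : (x+1)⁻¹ ≤ Real.log ((x+1)/x) := by
    have h := Real.log_le_sub_one_of_pos (show (0:ℝ) < x/(x+1) from div_pos hx0 hx1)
    have h2 : Real.log (x/(x+1)) = - Real.log ((x+1)/x) := by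
      rw [← Real.log_inv]; congr 1; field_simp
    rw [h2] at h
    have h3 : x/(x+1) - 1 = -((x+1)⁻¹) := by field_simp; ring
    rw [h3] at h; linarith
  have hexp : 1 + (s-1) * Real.log ((x+1)/x) ≤ ((x+1)/x) ^ (s-1) := by
    rw [Real.rpow_def_of_pos hquot]
    have h := Real.add_one_le_exp (Real.log ((x+1)/x) * (s-1))
    linarith
  have hkey : (s-1) * (x+1)⁻¹ ≤ ((x+1)/x) ^ (s-1) - 1 := by
    have h2 : (s-1) * (x+1)⁻¹ ≤ (s-1) * Real.log ((x+1)/x) :=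
      mul_le_mul_of_nonneg_left hlog (by linarith)
    linarith
  set u := (x+1) ^ (1-s) with hu
  set v := (x+1) ^ (s-1) with hv
  set w := (x+1) ^ (-s) with hw
  set A := x ^ (s-1) with hA
  set B := x ^ (1-s) with hB
  set r := ((x+1)/x) ^ (s-1) with hr
  have hApos : 0 < A := Real.rpow_pos_of_pos hx0 _
  have hupos : 0 < u := Real.rpow_pos_of_pos hx1 _
  have e1 : u * v = 1 := by rw [hu, hv, ← Real.rpow_add hx1]; norm_num
  have e2 : A * B = 1 := by rw [hA, hB, ← Real.rpow_add hx0]; norm_num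
  have e3 : r * A = v := by
    rw [hr, hv, hA, Real.div_rpow hx1.le hx0.le]
    field_simp
  have e4 : u * (x+1)⁻¹ = w := by
    rw [hu, hw, ← Real.rpow_neg_one (x+1), ← Real.rpow_add hx1]; ring_nf
  have e5 : u * r = B := by
    have h6 : u * r * A = B * A := by
      rw [mul_assoc, e3, e1, mul_comm B A, e2]
    exact mul_right_cancel₀ hApos.ne' h6
  have hmul := mul_le_mul_of_nonneg_left hkey hupos.le
  have l1 : u * ((s-1)*(x+1)⁻¹) = (s-1) * w := by rw [← e4]; ring
  have l2 : u * (r - 1) = B - u := by rw [mul_sub, mul_one, e5]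
  rw [l1, l2] at hmul
  exact hmul

lemma partial_sum_bound (s : ℝ) (hs : 1 < s) (m : ℕ) (hm : 1 ≤ m) (M : ℕ) :
    ∑ n ∈ Finset.Ico m M, ((n:ℝ)) ^ (-s) ≤ (m:ℝ)^(-s) + (m:ℝ)^(1-s)/(s-1) := by
  have hm0 : (0:ℝ) < m := by exact_mod_cast hm
  rcases le_or_gt M m with hMm | hmM
  · rw [Finset.Ico_eq_empty (by omega)]
    simp only [Finset.sum_empty]
    have hs1 : (0:ℝ) < s - 1 := by linarith
    have h1 : (0:ℝ) ≤ (m:ℝ)^(-s) := Real.rpow_nonneg hm0.le _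
    have h2 : (0:ℝ) ≤ (m:ℝ)^(1-s)/(s-1) := div_nonneg (Real.rpow_nonneg hm0.le _) hs1.le
    linarith
  · -- M = K + 1 with K ≥ m
    have key : ∀ K, m ≤ K → ∑ n ∈ Finset.Ico m (K+1), ((n:ℝ)) ^ (-s)
        ≤ (m:ℝ)^(-s) + ((m:ℝ)^(1-s) - (K:ℝ)^(1-s))/(s-1) := by
      intro K hK
      induction K, hK using Nat.le_induction with
      | base =>
        rw [Nat.Ico_succ_singleton, Finset.sum_singleton]
        simp
      | succ K hK ih =>
        rw [Finset.sum_Ico_succ_top (by omega)]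
        have hstep := step_ineq s hs (K:ℝ) (by exact_mod_cast le_trans hm hK)
        have hcast : ((K:ℝ)+1) = ((K+1 : ℕ) : ℝ) := by push_cast; ring
        rw [hcast] at hstep
        have hs1 : (0:ℝ) < s - 1 := by linarith
        have : ((K+1:ℕ):ℝ) ^ (-s) ≤ ((K:ℝ)^(1-s) - ((K+1:ℕ):ℝ)^(1-s))/(s-1) := by
          rw [le_div_iff₀ hs1]
          linarith [hstep]
        push_cast at this ⊢
        rw [sub_div] at this ⊢
        rw [sub_div] at ih
        push_cast at ih
        linarith [ih]
    rcases Nat.exists_eq_add_of_lt hmM with ⟨K, rfl⟩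
    have hK : m ≤ m + K := by omega
    calc ∑ n ∈ Finset.Ico m (m + K + 1), ((n:ℝ)) ^ (-s)
        ≤ (m:ℝ)^(-s) + ((m:ℝ)^(1-s) - ((m+K:ℕ):ℝ)^(1-s))/(s-1) := key (m+K) hK
      _ ≤ (m:ℝ)^(-s) + (m:ℝ)^(1-s)/(s-1) := by
          have h1 : (0:ℝ) ≤ ((m+K:ℕ):ℝ)^(1-s) := Real.rpow_nonneg (by positivity) _
          have hs1 : (0:ℝ) < s - 1 := by linarith
          rw [sub_div]
          have h2 : (0:ℝ) ≤ ((m+K:ℕ):ℝ)^(1-s)/(s-1) := div_nonneg h1 hs1.le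
          linarith

lemma tail_tsum_bound (s : ℝ) (hs : 1 < s) (m : ℕ) (hm : 1 ≤ m) :
    (∑' n : ℕ, if m ≤ n then ((n:ℝ)) ^ (-s) else 0) ≤ (1 + 1/(s-1)) * (m:ℝ)^(1-s) := by
  have hm1 : (1:ℝ) ≤ (m:ℝ) := by exact_mod_cast hm
  apply Real.tsum_le_of_sum_range_le
  · intro n; split_ifs; · positivity
    · exact le_refl 0
  · intro M
    have heq : ∑ n ∈ Finset.range M, (if m ≤ n then ((n:ℝ))^(-s) else 0)
        = ∑ n ∈ Finset.Ico m M, ((n:ℝ))^(-s) := by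
      rw [Finset.sum_ite, Finset.sum_const_zero, add_zero]
      congr 1
      ext n
      simp only [Finset.mem_filter, Finset.mem_range, Finset.mem_Ico]
      omega
    rw [heq]
    refine (partial_sum_bound s hs m hm M).trans ?_
    have h1 : (m:ℝ)^(-s) ≤ (m:ℝ)^(1-s) :=
      Real.rpow_le_rpow_of_exponent_le hm1 (by linarith)
    have h2 : (1 + 1/(s-1)) * (m:ℝ)^(1-s) = (m:ℝ)^(1-s) + (m:ℝ)^(1-s)/(s-1) := by ring
    rw [h2]
    have hs1 : (0:ℝ) < s - 1 := by linarith
    gcongr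

set_option maxHeartbeats 2000000 in
theorem stmt_4 (a b c : ℝ) (ha : 0 < a) (hac : a < c) (hcb : c ≤ b) :
    ∃ C > 0, ∃ T₀ : ℝ, ∀ T ≥ T₀,
      T * (∑' p : ℕ × ℕ,
        (if 0 < p.1 ∧ 0 < p.2 ∧ T ^ (3 * a / 2) < (p.1 : ℝ) ^ (a + b) * (p.2 : ℝ) ^ (a + c)
          then (p.1 : ℝ) ^ (-(1/2) - b / (2 * a)) * (p.2 : ℝ) ^ (-(1/2) - c / (2 * a)) else 0))
        ≤ C * T ^ (1/4 + 3 * a / (2 * (a + c))) * Real.log T := by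
  have hab : a < b := lt_of_lt_of_le hac hcb
  have ha2 : (0:ℝ) < 2*a := by linarith
  have hac0 : (0:ℝ) < a + c := by linarith
  have hab0 : (0:ℝ) < a + b := by linarith
  obtain ⟨s₂, hs₂def⟩ : ∃ x : ℝ, x = 1/2 + b/(2*a) := ⟨_, rfl⟩
  obtain ⟨s₃, hs₃def⟩ : ∃ x : ℝ, x = 1/2 + c/(2*a) := ⟨_, rfl⟩
  have hs₂ : 1 < s₂ := by
    have h1 : 1/2 < b/(2*a) := by rw [lt_div_iff₀ ha2]; linarith
    rw [hs₂def]; linarith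
  have hs₃ : 1 < s₃ := by
    have h1 : 1/2 < c/(2*a) := by rw [lt_div_iff₀ ha2]; linarith
    rw [hs₃def]; linarith
  obtain ⟨K₂, hK₂def⟩ : ∃ x : ℝ, x = 1 + 1/(s₂ - 1) := ⟨_, rfl⟩
  obtain ⟨K₃, hK₃def⟩ : ∃ x : ℝ, x = 1 + 1/(s₃ - 1) := ⟨_, rfl⟩
  have hK₂pos : 0 < K₂ := by
    have h1 : (0:ℝ) < 1/(s₂-1) := one_div_pos.mpr (by linarith)
    rw [hK₂def]; linarith
  have hK₃pos : 0 < K₃ := by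
    have h1 : (0:ℝ) < 1/(s₃-1) := one_div_pos.mpr (by linarith)
    rw [hK₃def]; linarith
  have hCpos : 0 < K₃ * (5/2) + K₃ * K₂ := by
    have h5 : (0:ℝ) < K₃ * (5/2) := mul_pos hK₃pos (by norm_num)
    have h6 := mul_pos hK₃pos hK₂pos
    linarith
  refine ⟨K₃ * (5/2) + K₃ * K₂, hCpos, Real.exp 1, fun T hT => ?_⟩
  have hT1 : (1:ℝ) ≤ T := by
    have h1 := Real.add_one_le_exp (1:ℝ)
    linarith
  have hT0 : (0:ℝ) < T := lt_of_lt_of_le one_pos hT1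
  have hlogT : 1 ≤ Real.log T := by
    rw [Real.le_log_iff_exp_le hT0]; simpa using hT
  obtain ⟨X, hXdef⟩ : ∃ x : ℝ, x = T ^ (3 * a / 2) := ⟨_, rfl⟩
  simp only [← hXdef]
  have hX1 : (1:ℝ) ≤ X := by
    rw [hXdef]; exact Real.one_le_rpow hT1 (by positivity)
  have hX0 : (0:ℝ) < X := lt_of_lt_of_le one_pos hX1
  obtain ⟨N, hNdef⟩ : ∃ x : ℝ, x = T ^ (3 * a / (2*(a+b))) := ⟨_, rfl⟩
  have hN1 : (1:ℝ) ≤ N := by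
    rw [hNdef]; exact Real.one_le_rpow hT1 (by positivity)
  have hN0 : (0:ℝ) < N := lt_of_lt_of_le one_pos hN1
  obtain ⟨M, hMdef⟩ : ∃ x : ℕ, x = ⌊N⌋₊ := ⟨_, rfl⟩
  obtain ⟨f, hfdef⟩ : ∃ g : ℕ × ℕ → ℝ, g = fun p =>
      (if 0 < p.1 ∧ 0 < p.2 ∧ X < (p.1 : ℝ) ^ (a + b) * (p.2 : ℝ) ^ (a + c)
        then (p.1 : ℝ) ^ (-(1/2) - b / (2 * a)) * (p.2 : ℝ) ^ (-(1/2) - c / (2 * a)) else 0) :=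
    ⟨_, rfl⟩
  rw [← hfdef]
  have hp₂ : -(1/2) - b/(2*a) = -s₂ := by rw [hs₂def]; ring
  have hp₃ : -(1/2) - c/(2*a) = -s₃ := by rw [hs₃def]; ring
  have hfnonneg : ∀ p, 0 ≤ f p := by
    intro p
    simp only [hfdef]
    split_ifs
    · positivity
    · exact le_refl 0
  have hsum₂ : Summable (fun n : ℕ => (n:ℝ) ^ (-s₂)) :=
    Real.summable_nat_rpow.mpr (by linarith)
  have hsum₃ : Summable (fun n : ℕ => (n:ℝ) ^ (-s₃)) :=
    Real.summable_nat_rpow.mpr (by linarith)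
  have hfsum : Summable f := by
    apply Summable.of_nonneg_of_le hfnonneg
      (f := fun p : ℕ × ℕ => (p.1:ℝ) ^ (-s₂) * (p.2:ℝ) ^ (-s₃))
    · intro p
      simp only [hfdef]
      split_ifs
      · rw [hp₂, hp₃]
      · positivity
    · exact Summable.mul_of_nonneg hsum₂ hsum₃
        (fun n => Real.rpow_nonneg n.cast_nonneg _) (fun n => Real.rpow_nonneg n.cast_nonneg _)
  obtain ⟨Y, hYdef⟩ : ∃ g : ℕ → ℝ, g = fun n : ℕ => (X / (n:ℝ) ^ (a+b)) ^ ((a+c)⁻¹) := ⟨_, rfl⟩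
  obtain ⟨mY, hmYdef⟩ : ∃ g : ℕ → ℕ, g = fun n : ℕ => ⌈max (Y n) 1⌉₊ := ⟨_, rfl⟩
  have hmaxpos : ∀ n, (0:ℝ) < max (Y n) 1 := fun n => lt_of_lt_of_le one_pos (le_max_right _ _)
  have hmY1 : ∀ n, 1 ≤ mY n := by
    intro n
    simp only [hmYdef]
    exact Nat.one_le_ceil_iff.mpr (hmaxpos n)
  have hterm : ∀ n2 n3 : ℕ,
      f (n2, n3) ≤ (n2:ℝ) ^ (-s₂) * (if mY n2 ≤ n3 then (n3:ℝ) ^ (-s₃) else 0) := by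
    intro n2 n3
    simp only [hfdef]
    by_cases h : 0 < n2 ∧ 0 < n3 ∧ X < (n2:ℝ) ^ (a+b) * (n3:ℝ) ^ (a+c)
    · rw [if_pos h]
      obtain ⟨h1, h3, hX4⟩ := h
      have hD : (0:ℝ) < (n2:ℝ) ^ (a+b) :=
        Real.rpow_pos_of_pos (by exact_mod_cast h1) _
      have hdiv : X / (n2:ℝ) ^ (a+b) < (n3:ℝ) ^ (a+c) :=
        (div_lt_iff₀ hD).mpr (lt_of_lt_of_eq hX4 (mul_comm _ _))
      have hYlt : Y n2 < (n3:ℝ) := by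
        have h5 : (X / (n2:ℝ) ^ (a+b)) ^ ((a+c)⁻¹) < ((n3:ℝ) ^ (a+c)) ^ ((a+c)⁻¹) :=
          Real.rpow_lt_rpow (by positivity) hdiv (by positivity)
        rw [← Real.rpow_mul n3.cast_nonneg, mul_inv_cancel₀ hac0.ne', Real.rpow_one] at h5
        simpa only [hYdef] using h5
      have hn31 : (1:ℝ) ≤ (n3:ℝ) := by exact_mod_cast h3
      have hceil : mY n2 ≤ n3 := by
        simp only [hmYdef]
        exact Nat.ceil_le.mpr (max_le hYlt.le hn31)
      rw [if_pos hceil, hp₂, hp₃]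
    · rw [if_neg h]
      apply mul_nonneg (Real.rpow_nonneg n2.cast_nonneg _)
      split_ifs
      · exact Real.rpow_nonneg n3.cast_nonneg _
      · exact le_refl 0
  obtain ⟨h, hhdef⟩ : ∃ g : ℕ → ℝ, g = fun n : ℕ => (n:ℝ) ^ (-s₂) * (K₃ * (max (Y n) 1) ^ (1 - s₃)) := ⟨_, rfl⟩
  have hhnonneg : ∀ n, 0 ≤ h n := by
    intro n
    simp only [hhdef]
    exact mul_nonneg (Real.rpow_nonneg n.cast_nonneg _)
      (mul_nonneg hK₃pos.le (Real.rpow_nonneg (hmaxpos n).le _))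
  have hindsum : ∀ m : ℕ, Summable (fun n : ℕ => if m ≤ n then (n:ℝ) ^ (-s₃) else 0) := by
    intro m
    apply Summable.of_nonneg_of_le _ _ hsum₃
    · intro n; split_ifs
      · exact Real.rpow_nonneg n.cast_nonneg _
      · exact le_refl 0
    · intro n; split_ifs
      · exact le_refl _
      · exact Real.rpow_nonneg n.cast_nonneg _
  have hindsum₂ : ∀ m : ℕ, Summable (fun n : ℕ => if m ≤ n then (n:ℝ) ^ (-s₂) else 0) := by
    intro m
    apply Summable.of_nonneg_of_le _ _ hsum₂
    · intro n; split_ifs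
      · exact Real.rpow_nonneg n.cast_nonneg _
      · exact le_refl 0
    · intro n; split_ifs
      · exact le_refl _
      · exact Real.rpow_nonneg n.cast_nonneg _
  have hinner : ∀ n2, (∑' n3, f (n2, n3)) ≤ h n2 := by
    intro n2
    have hsec : Summable (fun n3 => f (n2, n3)) := hfsum.prod_factor n2
    calc (∑' n3, f (n2, n3))
        ≤ ∑' n3 : ℕ, (n2:ℝ) ^ (-s₂) * (if mY n2 ≤ n3 then (n3:ℝ) ^ (-s₃) else 0) :=
          Summable.tsum_le_tsum (hterm n2) hsec ((hindsum (mY n2)).mul_left _)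
      _ = (n2:ℝ) ^ (-s₂) * ∑' n3 : ℕ, (if mY n2 ≤ n3 then (n3:ℝ) ^ (-s₃) else 0) :=
          tsum_mul_left
      _ ≤ h n2 := by
          simp only [hhdef]
          apply mul_le_mul_of_nonneg_left _ (Real.rpow_nonneg n2.cast_nonneg _)
          calc (∑' n3 : ℕ, (if mY n2 ≤ n3 then (n3:ℝ) ^ (-s₃) else 0))
              ≤ (1 + 1/(s₃-1)) * ((mY n2 : ℝ)) ^ (1-s₃) :=
                tail_tsum_bound s₃ hs₃ (mY n2) (hmY1 n2)
            _ ≤ K₃ * (max (Y n2) 1) ^ (1-s₃) := by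
                rw [hK₃def]
                apply mul_le_mul_of_nonneg_left _ (by rw [← hK₃def]; exact hK₃pos.le)
                have : (max (Y n2) 1 : ℝ) ≤ (mY n2 : ℝ) := by
                  simp only [hmYdef]; exact Nat.le_ceil _
                exact Real.rpow_le_rpow_of_nonpos (hmaxpos n2) this (by linarith)
  have hhle : ∀ n, h n ≤ K₃ * (n:ℝ) ^ (-s₂) := by
    intro n
    simp only [hhdef]
    have h1 : (max (Y n) 1) ^ (1-s₃) ≤ 1 :=
      Real.rpow_le_one_of_one_le_of_nonpos (le_max_right _ _) (by linarith)
    calc (n:ℝ) ^ (-s₂) * (K₃ * (max (Y n) 1) ^ (1 - s₃))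
        ≤ (n:ℝ) ^ (-s₂) * (K₃ * 1) :=
          mul_le_mul_of_nonneg_left
            (mul_le_mul_of_nonneg_left h1 hK₃pos.le) (Real.rpow_nonneg n.cast_nonneg _)
      _ = K₃ * (n:ℝ) ^ (-s₂) := by ring
  have hhsum : Summable h :=
    Summable.of_nonneg_of_le hhnonneg hhle (hsum₂.mul_left K₃)
  have hsplit : (∑' p, f p) ≤ ∑' n, h n := by
    rw [Summable.tsum_prod hfsum]
    exact Summable.tsum_le_tsum hinner hfsum.prod hhsum
  obtain ⟨h1f, hh1def⟩ : ∃ g : ℕ → ℝ, g = fun n : ℕ => if (n:ℝ) ≤ N then h n else 0 := ⟨_, rfl⟩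
  obtain ⟨h2f, hh2def⟩ : ∃ g : ℕ → ℝ, g = fun n : ℕ => if (n:ℝ) ≤ N then 0 else h n := ⟨_, rfl⟩
  have hh1nonneg : ∀ n, 0 ≤ h1f n := by
    intro n; simp only [hh1def]; split_ifs
    · exact hhnonneg n
    · exact le_refl 0
  have hh2nonneg : ∀ n, 0 ≤ h2f n := by
    intro n; simp only [hh2def]; split_ifs
    · exact le_refl 0
    · exact hhnonneg n
  have hh1le : ∀ n, h1f n ≤ h n := by
    intro n; simp only [hh1def]; split_ifs
    · exact le_refl _
    · exact hhnonneg n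
  have hh2le : ∀ n, h2f n ≤ h n := by
    intro n; simp only [hh2def]; split_ifs
    · exact hhnonneg n
    · exact le_refl _
  have hh1sum : Summable h1f := Summable.of_nonneg_of_le hh1nonneg hh1le hhsum
  have hh2sum : Summable h2f := Summable.of_nonneg_of_le hh2nonneg hh2le hhsum
  have htsumh : (∑' n, h n) = (∑' n, h1f n) + ∑' n, h2f n := by
    rw [← Summable.tsum_add hh1sum hh2sum]
    apply tsum_congr
    intro n
    simp only [hh1def, hh2def]
    split_ifs <;> ring
  obtain ⟨q, hqdef⟩ : ∃ x : ℝ, x = (a+c)⁻¹ * (1 - s₃) := ⟨_, rfl⟩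
  have hXq0 : (0:ℝ) < X ^ q := Real.rpow_pos_of_pos hX0 _
  have heexp : -s₂ - (a+b)*q ≤ -1 := by
    have heq : -s₂ - (a+b)*q = -1 + (c-b)/(a+c) := by
      rw [hqdef, hs₂def, hs₃def]
      field_simp
      ring
    rw [heq]
    have h2 : (c-b)/(a+c) ≤ 0 := div_nonpos_of_nonpos_of_nonneg (by linarith) hac0.le
    linarith
  have hNab : N ^ (a+b) = X := by
    rw [hNdef, hXdef, ← Real.rpow_mul hT0.le]
    congr 1
    field_simp
  have hharm : (harmonic M : ℝ) ≤ 1 + Real.log N := by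
    rw [hMdef]; exact harmonic_floor_le_one_add_log N hN1
  have hh0 : h 0 = 0 := by
    simp only [hhdef]
    rw [Nat.cast_zero, Real.zero_rpow (by linarith : -s₂ ≠ 0), zero_mul]
  have hpart1 : (∑' n, h1f n) ≤ K₃ * X^q * (1 + Real.log N) := by
    have hsupport : ∀ n : ℕ, n ∉ Finset.range (M+1) → h1f n = 0 := by
      intro n hn
      simp only [hh1def]
      rw [if_neg]
      intro hle
      apply hn
      rw [Finset.mem_range]
      have := Nat.le_floor hle
      omega
    rw [tsum_eq_sum hsupport]
    have hbound : ∀ n ∈ Finset.range (M+1),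
        h1f n ≤ (K₃ * X^q) * (if n = 0 then 0 else (n:ℝ)⁻¹) := by
      intro n _
      rcases Nat.eq_zero_or_pos n with rfl | hn
      · have hz : h1f 0 = 0 := by
          rw [hh1def]
          dsimp only
          split_ifs
          · exact hh0
          · rfl
        rw [hz, if_pos rfl, mul_zero]
      · rw [if_neg (by omega)]
        simp only [hh1def]
        split_ifs with hnN
        · have hn1 : (1:ℝ) ≤ (n:ℝ) := by exact_mod_cast hn
          have hn0 : (0:ℝ) < (n:ℝ) := by linarith
          have hD0 : (0:ℝ) < (n:ℝ) ^ (a+b) := Real.rpow_pos_of_pos hn0 _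
          have hDX : (n:ℝ) ^ (a+b) ≤ X := by
            rw [← hNab]
            exact Real.rpow_le_rpow hn0.le hnN (by linarith)
          have hY1 : (1:ℝ) ≤ Y n := by
            simp only [hYdef]
            have h5 : (1:ℝ) ≤ X / (n:ℝ) ^ (a+b) := (one_le_div hD0).mpr hDX
            exact Real.one_le_rpow h5 (by positivity)
          have hmaxY : max (Y n) 1 = Y n := max_eq_left (by linarith)
          simp only [hhdef]
          rw [hmaxY]
          simp only [hYdef]
          rw [← Real.rpow_mul (by positivity : (0:ℝ) ≤ X / (n:ℝ) ^ (a+b)), ← hqdef]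
          rw [Real.div_rpow hX0.le hD0.le, ← Real.rpow_mul hn0.le]
          rw [div_eq_mul_inv, ← Real.rpow_neg hn0.le]
          have hcollect : (n:ℝ) ^ (-s₂) * (K₃ * (X^q * (n:ℝ) ^ (-((a+b)*q))))
              = (K₃ * X^q) * ((n:ℝ) ^ (-s₂) * (n:ℝ) ^ (-((a+b)*q))) := by ring
          rw [hcollect, ← Real.rpow_add hn0]
          have hle2 : (n:ℝ) ^ (-s₂ + -((a+b)*q)) ≤ (n:ℝ)⁻¹ := by
            rw [← Real.rpow_neg_one (n:ℝ)]
            exact Real.rpow_le_rpow_of_exponent_le hn1 (by linarith [heexp])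
          exact mul_le_mul_of_nonneg_left hle2 (by positivity)
        · exact mul_nonneg (mul_nonneg hK₃pos.le hXq0.le) (by positivity)
    calc ∑ n ∈ Finset.range (M+1), h1f n
        ≤ ∑ n ∈ Finset.range (M+1), (K₃ * X^q) * (if n = 0 then 0 else (n:ℝ)⁻¹) :=
          Finset.sum_le_sum hbound
      _ = (K₃ * X^q) * ∑ n ∈ Finset.range (M+1), (if n = 0 then 0 else (n:ℝ)⁻¹) := by
          rw [← Finset.mul_sum]
      _ ≤ K₃ * X^q * (1 + Real.log N) := by
          apply mul_le_mul_of_nonneg_left _ (mul_nonneg hK₃pos.le hXq0.le)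
          have hsum : ∑ n ∈ Finset.range (M+1), (if n = 0 then 0 else (n:ℝ)⁻¹)
              = (harmonic M : ℝ) := by
            have hH : (harmonic M : ℝ) = ∑ i ∈ Finset.range M, ((i:ℝ)+1)⁻¹ := by
              unfold harmonic
              push_cast
              rfl
            rw [hH, Finset.sum_range_succ']
            simp
          rw [hsum]
          exact hharm
  obtain ⟨m₂, hm₂def⟩ : ∃ x : ℕ, x = ⌈N⌉₊ := ⟨_, rfl⟩
  have hm₂1 : 1 ≤ m₂ := by rw [hm₂def]; exact Nat.one_le_ceil_iff.mpr hN0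
  have hpart2 : (∑' n, h2f n) ≤ K₃ * (K₂ * N ^ (1 - s₂)) := by
    have hb : ∀ n, h2f n ≤ K₃ * (if m₂ ≤ n then (n:ℝ) ^ (-s₂) else 0) := by
      intro n
      simp only [hh2def]
      split_ifs with hnN hm hm2
      · exact mul_nonneg hK₃pos.le (Real.rpow_nonneg n.cast_nonneg _)
      · exact mul_nonneg hK₃pos.le (le_refl 0)
      · exact hhle n
      · exfalso
        apply hm2
        rw [hm₂def]
        exact Nat.ceil_le.mpr (le_of_lt (lt_of_not_ge hnN))
    calc (∑' n, h2f n)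
        ≤ ∑' n : ℕ, K₃ * (if m₂ ≤ n then (n:ℝ) ^ (-s₂) else 0) :=
          Summable.tsum_le_tsum hb hh2sum ((hindsum₂ m₂).mul_left K₃)
      _ = K₃ * ∑' n : ℕ, (if m₂ ≤ n then (n:ℝ) ^ (-s₂) else 0) := tsum_mul_left
      _ ≤ K₃ * (K₂ * N ^ (1 - s₂)) := by
          apply mul_le_mul_of_nonneg_left _ hK₃pos.le
          calc (∑' n : ℕ, (if m₂ ≤ n then (n:ℝ) ^ (-s₂) else 0))
              ≤ (1 + 1/(s₂-1)) * (m₂:ℝ) ^ (1-s₂) := tail_tsum_bound s₂ hs₂ m₂ hm₂1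
            _ ≤ K₂ * N ^ (1-s₂) := by
                rw [hK₂def]
                apply mul_le_mul_of_nonneg_left _ (by rw [← hK₂def]; exact hK₂pos.le)
                have hNle : N ≤ (m₂:ℝ) := by rw [hm₂def]; exact Nat.le_ceil _
                exact Real.rpow_le_rpow_of_nonpos hN0 hNle (by linarith)
  have htotal : (∑' p, f p) ≤ K₃ * X^q * (1 + Real.log N) + K₃ * (K₂ * N ^ (1-s₂)) := by
    refine hsplit.trans ?_
    rw [htsumh]
    exact add_le_add hpart1 hpart2
  obtain ⟨α, hαdef⟩ : ∃ x : ℝ, x = 1/4 + 3 * a / (2 * (a + c)) := ⟨_, rfl⟩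
  rw [← hαdef]
  have hTA : T * X^q = T ^ α := by
    rw [hXdef, ← Real.rpow_mul hT0.le]
    rw [show T * T ^ (3 * a / 2 * q) = T ^ (1 + 3 * a / 2 * q) by
      rw [Real.rpow_add hT0, Real.rpow_one]]
    congr 1
    rw [hqdef, hs₃def, hαdef]
    field_simp
    ring
  have hTN : T * N ^ (1-s₂) ≤ T ^ α := by
    rw [hNdef, ← Real.rpow_mul hT0.le]
    rw [show T * T ^ (3 * a / (2*(a+b)) * (1-s₂)) = T ^ (1 + 3 * a / (2*(a+b)) * (1-s₂)) by
      rw [Real.rpow_add hT0, Real.rpow_one]]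
    apply Real.rpow_le_rpow_of_exponent_le hT1
    have hkey : α - (1 + 3 * a / (2*(a+b)) * (1-s₂)) = 6*a*(b-c)/(4*(a+b)*(a+c)) := by
      rw [hs₂def, hαdef]
      field_simp
      ring
    have h2 : (0:ℝ) ≤ 6*a*(b-c)/(4*(a+b)*(a+c)) := by
      apply div_nonneg
      · nlinarith
      · nlinarith
    linarith
  have hlogN : 1 + Real.log N ≤ (5/2) * Real.log T := by
    rw [hNdef, Real.log_rpow hT0]
    have hco : 3 * a / (2*(a+b)) ≤ 3/2 := by
      rw [div_le_iff₀ (by linarith)]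
      nlinarith
    have h2 : 3 * a / (2*(a+b)) * Real.log T ≤ (3/2) * Real.log T :=
      mul_le_mul_of_nonneg_right hco (by linarith)
    linarith
  calc T * (∑' p, f p)
      ≤ T * (K₃ * X^q * (1 + Real.log N) + K₃ * (K₂ * N ^ (1-s₂))) :=
        mul_le_mul_of_nonneg_left htotal hT0.le
    _ = K₃ * (T * X^q) * (1 + Real.log N) + K₃ * K₂ * (T * N ^ (1-s₂)) := by ring
    _ ≤ K₃ * T^α * ((5/2) * Real.log T) + K₃ * K₂ * (T^α * Real.log T) := by
        apply add_le_add
        · rw [hTA]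
          apply mul_le_mul_of_nonneg_left hlogN
          exact mul_nonneg hK₃pos.le (Real.rpow_pos_of_pos hT0 _).le
        · apply mul_le_mul_of_nonneg_left _ (mul_nonneg hK₃pos.le hK₂pos.le)
          calc T * N ^ (1-s₂) ≤ T^α := hTN
            _ ≤ T^α * Real.log T := le_mul_of_one_le_right (Real.rpow_pos_of_pos hT0 _).le hlogT
    _ = (K₃ * (5/2) + K₃ * K₂) * T^α * Real.log T := by ring
end

section
/- Let a, b, c be real numbers with 0 < a < c ≤ b. There exists a constant C > 0 such that for all sufficiently large T, ∑_{(n_2,n_3)} n_2^{(b−a)/(2a)} n_3^{(c−a)/(2a)} ≤ C · T^{(a+c)/(2c)} · log T, where the sum runs over pairs of positive integers (n_2, n_3) with n_2^{b/a} n_3^{c/a} ≤ a T/(2π). -/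
open Real Finset

/-!
Write `p = b/a`, `q = c/a` and `X = aT/(2π)`, so that the sum runs over `n₂^p n₃^q ≤ X` with
weights `n₂^((p-1)/2) n₃^((q-1)/2)`. For fixed `n₂` the admissible `n₃` are those up to
`M = (X / n₂^p)^(1/q)`, and since `q ≥ 1` the inner sum is at most `M · M^((q-1)/2)`, which is
`X^β n₂^(-(p+q)/(2q))` with `β = (q+1)/(2q) = (a+c)/(2c)`. As `q ≤ p` this is at most `X^β / n₂`,
and summing over `n₂ ≤ X` costs a harmonic sum, that is a factor `1 + log X`.
-/

noncomputable def latticeWeight (p q X : ℝ) (n : ℕ × ℕ) : ℝ :=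
  if 0 < n.1 ∧ 0 < n.2 ∧ (n.1 : ℝ) ^ p * (n.2 : ℝ) ^ q ≤ X then
    (n.1 : ℝ) ^ ((p - 1) / 2) * (n.2 : ℝ) ^ ((q - 1) / 2)
  else 0

lemma card_filter_Icc_natCast_le (N : ℕ) {M : ℝ} (hM : 0 ≤ M) :
    (#{n ∈ Icc 1 N | ((n : ℕ) : ℝ) ≤ M} : ℝ) ≤ M := by
  have hsub : {n ∈ Icc 1 N | ((n : ℕ) : ℝ) ≤ M} ⊆ Icc 1 ⌊M⌋₊ := by
    intro n hn
    simp only [mem_filter, mem_Icc] at hn ⊢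
    exact ⟨hn.1.1, Nat.le_floor hn.2⟩
  calc (#{n ∈ Icc 1 N | ((n : ℕ) : ℝ) ≤ M} : ℝ) ≤ #(Icc 1 ⌊M⌋₊) := by exact_mod_cast card_le_card hsub
    _ = ⌊M⌋₊ := by simp
    _ ≤ M := Nat.floor_le hM

lemma sum_filter_Icc_rpow_le (N : ℕ) {M e : ℝ} (hM : 0 ≤ M) (he : 0 ≤ e) :
    ∑ n ∈ Icc 1 N with ((n : ℕ) : ℝ) ≤ M, (n : ℝ) ^ e ≤ M ^ (e + 1) := by
  calc ∑ n ∈ Icc 1 N with ((n : ℕ) : ℝ) ≤ M, (n : ℝ) ^ e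
      ≤ ∑ n ∈ Icc 1 N with ((n : ℕ) : ℝ) ≤ M, M ^ e :=
        sum_le_sum fun n hn => rpow_le_rpow n.cast_nonneg (mem_filter.1 hn).2 he
    _ = #{n ∈ Icc 1 N | ((n : ℕ) : ℝ) ≤ M} * M ^ e := by rw [sum_const, nsmul_eq_mul]
    _ ≤ M * M ^ e := by gcongr; exact card_filter_Icc_natCast_le N hM
    _ = M ^ (e + 1) := by rw [rpow_add_one' hM (by positivity), mul_comm]

lemma sum_Icc_inv_le_one_add_log (N : ℕ) : ∑ n ∈ Icc 1 N, (n : ℝ)⁻¹ ≤ 1 + log N := by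
  simpa [harmonic_eq_sum_Icc] using harmonic_le_one_add_log N

lemma rpow_mul_rpow_le_iff {x y X p q : ℝ} (hx : 0 < x) (hy : 0 ≤ y) (hX : 0 ≤ X) (hq : 0 < q) :
    x ^ p * y ^ q ≤ X ↔ y ≤ (X / x ^ p) ^ q⁻¹ := by
  rw [le_rpow_inv_iff_of_pos hy (by positivity) hq, le_div_iff₀ (by positivity), mul_comm]

lemma latticeWeight_eq_zero_of_notMem {p q X : ℝ} (hp : 1 ≤ p) (hq : 1 ≤ q) {n : ℕ × ℕ}
    (hn : n ∉ Icc 1 ⌊X⌋₊ ×ˢ Icc 1 ⌊X⌋₊) : latticeWeight p q X n = 0 := by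
  refine if_neg fun ⟨h₁, h₂, hX⟩ => hn ?_
  have h₁' : (1 : ℝ) ≤ n.1 := by exact_mod_cast h₁
  have h₂' : (1 : ℝ) ≤ n.2 := by exact_mod_cast h₂
  have hp₁ : 1 ≤ (n.1 : ℝ) ^ p := one_le_rpow h₁' (by linarith)
  have hq₁ : 1 ≤ (n.2 : ℝ) ^ q := one_le_rpow h₂' (by linarith)
  simp only [mem_product, mem_Icc]
  refine ⟨⟨h₁, Nat.le_floor ?_⟩, ⟨h₂, Nat.le_floor ?_⟩⟩
  · calc (n.1 : ℝ) ≤ (n.1 : ℝ) ^ p := self_le_rpow_of_one_le h₁' hp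
      _ ≤ (n.1 : ℝ) ^ p * (n.2 : ℝ) ^ q := le_mul_of_one_le_right (by positivity) hq₁
      _ ≤ X := hX
  · calc (n.2 : ℝ) ≤ (n.2 : ℝ) ^ q := self_le_rpow_of_one_le h₂' hq
      _ ≤ (n.1 : ℝ) ^ p * (n.2 : ℝ) ^ q := le_mul_of_one_le_left (by positivity) hp₁
      _ ≤ X := hX

lemma sum_latticeWeight_le {p q X : ℝ} (hqp : q ≤ p) (hq : 1 ≤ q) (hX : 0 ≤ X) (N : ℕ) {m : ℕ}
    (hm : 1 ≤ m) :
    ∑ k ∈ Icc 1 N, latticeWeight p q X (m, k) ≤ X ^ ((q + 1) / (2 * q)) / m := by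
  have hm₀ : (0 : ℝ) < m := by positivity
  set β := (q + 1) / (2 * q)
  set M := (X / (m : ℝ) ^ p) ^ q⁻¹
  have hsum : ∑ k ∈ Icc 1 N, latticeWeight p q X (m, k)
      = (m : ℝ) ^ ((p - 1) / 2) * ∑ k ∈ Icc 1 N with ((k : ℕ) : ℝ) ≤ M, (k : ℝ) ^ ((q - 1) / 2) := by
    rw [sum_filter, mul_sum]
    refine sum_congr rfl fun k hk => ?_
    have hk : 0 < k := (mem_Icc.1 hk).1
    simp only [latticeWeight, rpow_mul_rpow_le_iff hm₀ k.cast_nonneg hX (by linarith : 0 < q),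
      show 0 < m from hm, hk, true_and]
    split_ifs <;> simp
  have hMβ : M ^ ((q - 1) / 2 + 1) = (X / (m : ℝ) ^ p) ^ β := by
    rw [← rpow_mul (by positivity)]
    congr 1
    simp only [β]
    field_simp
    ring
  have hexp : (p - 1) / 2 - p * β ≤ -1 := by
    have : (p - 1) / 2 - p * β = -((p + q) / (2 * q)) := by
      simp only [β]; field_simp; ring
    rw [this, neg_le_neg_iff, one_le_div (by positivity)]
    linarith
  calc ∑ k ∈ Icc 1 N, latticeWeight p q X (m, k)
      ≤ (m : ℝ) ^ ((p - 1) / 2) * M ^ ((q - 1) / 2 + 1) := by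
        rw [hsum]; gcongr; exact sum_filter_Icc_rpow_le N (by positivity) (by linarith)
    _ = X ^ β * (m : ℝ) ^ ((p - 1) / 2 - p * β) := by
        rw [hMβ, div_rpow hX (by positivity), ← rpow_mul hm₀.le, rpow_sub hm₀]
        ring
    _ ≤ X ^ β * (m : ℝ) ^ (-1 : ℝ) := by gcongr; exact_mod_cast hm
    _ = X ^ β / m := by rw [rpow_neg_one, div_eq_mul_inv]

theorem tsum_latticeWeight_le {p q X : ℝ} (hqp : q ≤ p) (hq : 1 ≤ q) (hX : 1 ≤ X) :
    ∑' n, latticeWeight p q X n ≤ X ^ ((q + 1) / (2 * q)) * (1 + log X) := by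
  set N := ⌊X⌋₊
  have hN : (0 : ℝ) < N := by exact_mod_cast Nat.floor_pos.2 hX
  rw [tsum_eq_sum fun n hn => latticeWeight_eq_zero_of_notMem (hq.trans hqp) hq hn, sum_product]
  calc ∑ m ∈ Icc 1 N, ∑ k ∈ Icc 1 N, latticeWeight p q X (m, k)
      ≤ ∑ m ∈ Icc 1 N, X ^ ((q + 1) / (2 * q)) / m :=
        sum_le_sum fun m hm => sum_latticeWeight_le hqp hq (by linarith) N (mem_Icc.1 hm).1
    _ = X ^ ((q + 1) / (2 * q)) * ∑ m ∈ Icc 1 N, (m : ℝ)⁻¹ := by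
        simp only [mul_sum, div_eq_mul_inv]
    _ ≤ X ^ ((q + 1) / (2 * q)) * (1 + log N) := by gcongr; exact sum_Icc_inv_le_one_add_log N
    _ ≤ X ^ ((q + 1) / (2 * q)) * (1 + log X) := by
        gcongr; exact Nat.floor_le (by linarith)

lemma one_add_log_mul_le {κ T : ℝ} (hκ : 0 < κ) (hκT : κ ≤ T) (hT : exp 1 ≤ T) :
    1 + log (κ * T) ≤ 3 * log T := by
  have hT₀ : 0 < T := (exp_pos 1).trans_le hT
  have h₁ : 1 ≤ log T := by rwa [le_log_iff_exp_le hT₀]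
  have h₂ : log (κ * T) ≤ log (T * T) := log_le_log (by positivity) (by gcongr)
  rw [log_mul hT₀.ne' hT₀.ne'] at h₂
  linarith

theorem stmt_6 (a b c : ℝ) (ha : 0 < a) (hac : a < c) (hcb : c ≤ b) :
    ∃ C > 0, ∃ T₀ : ℝ, ∀ T ≥ T₀,
      (∑' p : ℕ × ℕ,
        (if 0 < p.1 ∧ 0 < p.2 ∧ (p.1 : ℝ) ^ (b / a) * (p.2 : ℝ) ^ (c / a) ≤ a * T / (2 * π)
          then (p.1 : ℝ) ^ ((b - a) / (2 * a)) * (p.2 : ℝ) ^ ((c - a) / (2 * a)) else 0))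
        ≤ C * T ^ ((a + c) / (2 * c)) * Real.log T := by
  set κ := a / (2 * π)
  have hκ : 0 < κ := by positivity
  refine ⟨3 * κ ^ ((a + c) / (2 * c)), by positivity, max (max κ κ⁻¹) (exp 1), fun T hT => ?_⟩
  obtain ⟨⟨hκT, hκT'⟩, heT⟩ : (κ ≤ T ∧ κ⁻¹ ≤ T) ∧ exp 1 ≤ T := by simpa using hT
  have hX : 1 ≤ κ * T := by rwa [inv_le_iff_one_le_mul₀' hκ] at hκT'
  have hweight : ∀ n : ℕ × ℕ,
      (if 0 < n.1 ∧ 0 < n.2 ∧ (n.1 : ℝ) ^ (b / a) * (n.2 : ℝ) ^ (c / a) ≤ a * T / (2 * π)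
        then (n.1 : ℝ) ^ ((b - a) / (2 * a)) * (n.2 : ℝ) ^ ((c - a) / (2 * a)) else 0)
        = latticeWeight (b / a) (c / a) (κ * T) n := fun n => by
    rw [latticeWeight, show a * T / (2 * π) = κ * T by ring,
      show (b - a) / (2 * a) = (b / a - 1) / 2 by field_simp,
      show (c - a) / (2 * a) = (c / a - 1) / 2 by field_simp]
  have hβ : (c / a + 1) / (2 * (c / a)) = (a + c) / (2 * c) := by field_simp; ring
  have hbound := tsum_latticeWeight_le (X := κ * T) (div_le_div_of_nonneg_right hcb ha.le)
    ((one_le_div ha).2 hac.le) hX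
  rw [hβ] at hbound
  calc _ = ∑' n, latticeWeight (b / a) (c / a) (κ * T) n := tsum_congr hweight
    _ ≤ (κ * T) ^ ((a + c) / (2 * c)) * (1 + log (κ * T)) := hbound
    _ ≤ (κ * T) ^ ((a + c) / (2 * c)) * (3 * log T) := by
        gcongr; exact one_add_log_mul_le hκ hκT heT
    _ = 3 * κ ^ ((a + c) / (2 * c)) * T ^ ((a + c) / (2 * c)) * log T := by
        rw [mul_rpow hκ.le (by linarith)]; ring
end
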